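/- Uniform boundedness of set-valued signals propagates through a bounded-gain recursion: if D(C_j) ≤ M for all j ≥ j₀, D(W_j) ≤ M' for all j, A_ō satisfies sup_k ∑_{j=j₀}^{k-1} ‖A_ō^{k-1-j} restricted to the contracting part‖ < ∞ via a splitting Q with Q_{=1}A_21 = 0 and Q_{=1}B_ō = 0, then the sets S_k = ∑_{j=j₀}^{k-1} A_ō^{k-1-j}(A_21 C_j + B_ō W_j) have uniformly bounded diameter. -/

import Mathlib

open scoped Pointwise NNReal ENNReal

open scoped Matrix.Norms.L2Operator

namespace BddRecAux

lemma ediam_set_add {E : Type*} [SeminormedAddCommGroup E] (s t : Set E) :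
    EMetric.diam (s + t) ≤ EMetric.diam s + EMetric.diam t := by
  apply EMetric.diam_le
  intro x hx y hy
  obtain ⟨a, ha, b, hb, rfl⟩ := Set.mem_add.mp hx
  obtain ⟨c, hc, e, he, rfl⟩ := Set.mem_add.mp hy
  calc edist (a + b) (c + e)
      ≤ edist (a + b) (c + b) + edist (c + b) (c + e) := edist_triangle _ _ _
    _ = edist a c + edist b e := by rw [edist_add_right, edist_add_left]
    _ ≤ _ := add_le_add (EMetric.edist_le_diam_of_mem ha hc)
        (EMetric.edist_le_diam_of_mem hb he)

lemma ediam_finset_sum {ι E : Type*} [SeminormedAddCommGroup E] (s : Finset ι)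
    (F : ι → Set E) :
    EMetric.diam (∑ i ∈ s, F i) ≤ ∑ i ∈ s, EMetric.diam (F i) := by
  classical
  induction s using Finset.cons_induction with
  | empty =>
      simp only [Finset.sum_empty]
      have : (0 : Set E) = {0} := rfl
      simp [this]
      exact EMetric.diam_singleton
  | cons a s ha ih =>
      rw [Finset.sum_cons, Finset.sum_cons]
      exact (ediam_set_add _ _).trans (add_le_add le_rfl ih)

lemma norm_toEuclideanLin_apply_le {a b : ℕ} (M : Matrix (Fin a) (Fin b) ℝ)
    (x : EuclideanSpace ℝ (Fin b)) :
    ‖Matrix.toEuclideanLin M x‖ ≤ ‖M.map Complex.ofReal‖ * ‖x‖ := by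
  set xc : EuclideanSpace ℂ (Fin b) :=
    (WithLp.equiv 2 _).symm (fun j => ((WithLp.equiv 2 _ x) j : ℂ)) with hxc
  have hx : ‖xc‖ = ‖x‖ := by
    rw [EuclideanSpace.norm_eq, EuclideanSpace.norm_eq]
    congr 1
    apply Finset.sum_congr rfl
    intro i _
    simp [hxc]
  have hentry : ∀ i, (Matrix.toEuclideanLin (M.map Complex.ofReal) xc) i
      = ((Matrix.toEuclideanLin M x) i : ℂ) := by
    intro i
    simp [Matrix.toEuclideanLin_apply, Matrix.mulVec, dotProduct, hxc,
      Matrix.map_apply]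
  have him : ‖Matrix.toEuclideanLin M x‖
      = ‖Matrix.toEuclideanLin (M.map Complex.ofReal) xc‖ := by
    rw [EuclideanSpace.norm_eq, EuclideanSpace.norm_eq]
    congr 1
    apply Finset.sum_congr rfl
    intro i _
    rw [hentry i, Complex.norm_real]
  rw [him, ← hx]
  calc ‖Matrix.toEuclideanLin (M.map Complex.ofReal) xc‖
      = ‖((Matrix.toEuclideanLin.trans LinearMap.toContinuousLinearMap)
          (M.map Complex.ofReal)) xc‖ := rfl
    _ ≤ ‖(Matrix.toEuclideanLin.trans LinearMap.toContinuousLinearMap)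
          (M.map Complex.ofReal)‖ * ‖xc‖ := ContinuousLinearMap.le_opNorm _ _
    _ = ‖M.map Complex.ofReal‖ * ‖xc‖ := by rw [← Matrix.l2_opNorm_def]

lemma lipschitzWith_toEuclideanLin {a b : ℕ} (M : Matrix (Fin a) (Fin b) ℝ) :
    LipschitzWith ‖M.map Complex.ofReal‖₊ (Matrix.toEuclideanLin M) := by
  apply LipschitzWith.of_dist_le_mul
  intro x y
  rw [dist_eq_norm, dist_eq_norm, ← map_sub]
  simpa using norm_toEuclideanLin_apply_le M (x - y)

lemma toEuclideanLin_mul_apply {a b c : ℕ} (M : Matrix (Fin a) (Fin b) ℝ)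
    (N : Matrix (Fin b) (Fin c) ℝ) (v : EuclideanSpace ℝ (Fin c)) :
    Matrix.toEuclideanLin (M * N) v
      = Matrix.toEuclideanLin M (Matrix.toEuclideanLin N v) := by
  simp [Matrix.toEuclideanLin_apply, Matrix.mulVec_mulVec]


lemma jordan_decay {m1 : ℕ} (J : Matrix (Fin m1) (Fin m1) ℂ)
    (hJ : ∀ μ ∈ spectrum ℂ J, ‖μ‖ < 1) :
    ∃ (cJ r : ℝ≥0), r < 1 ∧ ∀ n : ℕ, ‖J ^ n‖₊ ≤ cJ * r ^ n := by
  haveI : CompleteSpace (Matrix (Fin m1) (Fin m1) ℂ) := FiniteDimensional.complete ℂ _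
  have hρ : spectralRadius ℂ J < 1 := by
    rcases Set.eq_empty_or_nonempty (spectrum ℂ J) with h | h
    · have h0 : spectralRadius ℂ J = 0 := by simp [spectralRadius, h]
      rw [h0]; exact zero_lt_one
    · have : spectralRadius ℂ J < ((1 : ℝ≥0) : ℝ≥0∞) := by
        apply spectrum.spectralRadius_lt_of_forall_lt_of_nonempty h
        intro k hk
        have h1 : ‖k‖ < 1 := by exact hJ k hk
        exact_mod_cast h1
      simpa using this
  obtain ⟨r, hr1, hr2⟩ := ENNReal.lt_iff_exists_nnreal_btwn.mp hρ
  have hr2' : r < 1 := by exact_mod_cast hr2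
  have hr0 : 0 < r := by
    rcases eq_or_lt_of_le (zero_le : (0 : ℝ≥0) ≤ r) with h | h
    · exfalso
      rw [← h] at hr1
      simp at hr1
    · exact h
  have hgel := spectrum.pow_nnnorm_pow_one_div_tendsto_nhds_spectralRadius J
  have hev : ∀ᶠ n : ℕ in Filter.atTop,
      (‖J ^ n‖₊ : ℝ≥0∞) ^ (1 / (n : ℝ)) < (r : ℝ≥0∞) :=
    hgel.eventually_lt_const hr1
  obtain ⟨N, hN⟩ := Filter.eventually_atTop.mp hev
  have key : ∀ n : ℕ, N ⊔ 1 ≤ n → ‖J ^ n‖₊ ≤ r ^ n := by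
    intro n hn
    have hn1 : 1 ≤ n := le_trans le_sup_right hn
    have hnpos : (0 : ℝ) < (n : ℝ) := by exact_mod_cast hn1
    have h1 := hN n (le_trans le_sup_left hn)
    have h2 := ENNReal.rpow_lt_rpow h1 hnpos
    have h3 : ((‖J ^ n‖₊ : ℝ≥0∞) ^ (1 / (n : ℝ))) ^ (n : ℝ)
        = (‖J ^ n‖₊ : ℝ≥0∞) := by
      rw [← ENNReal.rpow_mul, one_div, inv_mul_cancel₀ hnpos.ne', ENNReal.rpow_one]
    rw [h3] at h2
    have h4 : ((r : ℝ≥0∞)) ^ ((n : ℕ) : ℝ) = ((r ^ n : ℝ≥0) : ℝ≥0∞) := by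
      rw [ENNReal.rpow_natCast]; push_cast; ring
    rw [h4] at h2
    exact_mod_cast h2.le
  refine ⟨((Finset.range (N ⊔ 1)).sup fun n => ‖J ^ n‖₊ / r ^ n) ⊔ 1, r, hr2', ?_⟩
  intro n
  rcases lt_or_ge n (N ⊔ 1) with h | h
  · have h1 : ‖J ^ n‖₊ / r ^ n
        ≤ (Finset.range (N ⊔ 1)).sup fun n => ‖J ^ n‖₊ / r ^ n :=
      Finset.le_sup (f := fun n => ‖J ^ n‖₊ / r ^ n) (Finset.mem_range.mpr h)
    have h2 : ‖J ^ n‖₊ = (‖J ^ n‖₊ / r ^ n) * r ^ n := by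
      rw [div_mul_cancel₀]
      exact pow_ne_zero _ hr0.ne'
    rw [h2]
    exact mul_le_mul_left (h1.trans le_sup_left) _
  · calc ‖J ^ n‖₊ ≤ r ^ n := key n h
      _ = 1 * r ^ n := (one_mul _).symm
      _ ≤ _ := mul_le_mul_left le_sup_right _



lemma key_bound {m' m1 m2 c : ℕ}
    (Ac : Matrix (Fin m') (Fin m') ℂ)
    (Q : Matrix (Fin m1 ⊕ Fin m2) (Fin m') ℂ)
    (J : Matrix (Fin m1) (Fin m1) ℂ) (d : Fin m2 → ℂ)
    (hQ : Function.Bijective Q.mulVec)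
    (hsim : Q * Ac = Matrix.fromBlocks J 0 0 (Matrix.diagonal d) * Q)
    (Nc : Matrix (Fin m') (Fin c) ℂ)
    (hQN : Q.submatrix Sum.inr id * Nc = 0) :
    ∃ K : ℝ≥0, ∀ n : ℕ, ‖Ac ^ n * Nc‖₊ ≤ K * ‖J ^ n‖₊ := by
  classical
  set Dm : Matrix (Fin m1 ⊕ Fin m2) (Fin m1 ⊕ Fin m2) ℂ :=
    Matrix.fromBlocks J 0 0 (Matrix.diagonal d) with hDm
  -- the inverse of Q
  have hQ' : Function.Bijective (Matrix.toLin' Q) := by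
    have : ⇑(Matrix.toLin' Q) = Q.mulVec := funext fun v => Matrix.toLin'_apply Q v
    rw [this]; exact hQ
  set e : (Fin m' → ℂ) ≃ₗ[ℂ] (Fin m1 ⊕ Fin m2 → ℂ) :=
    LinearEquiv.ofBijective (Matrix.toLin' Q) hQ' with he
  set P : Matrix (Fin m') (Fin m1 ⊕ Fin m2) ℂ :=
    LinearMap.toMatrix' (e.symm : (Fin m1 ⊕ Fin m2 → ℂ) →ₗ[ℂ] (Fin m' → ℂ)) with hP
  have hPQ : P * Q = 1 := by
    have h1 : (e.symm : (Fin m1 ⊕ Fin m2 → ℂ) →ₗ[ℂ] (Fin m' → ℂ)).comp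
        (Matrix.toLin' Q) = LinearMap.id := by
      apply LinearMap.ext
      intro x
      have hx : Matrix.toLin' Q x = e x := rfl
      simp [LinearMap.comp_apply, hx]
    calc P * Q = P * LinearMap.toMatrix' (Matrix.toLin' Q) := by
          rw [LinearMap.toMatrix'_toLin']
      _ = LinearMap.toMatrix'
          ((e.symm : (Fin m1 ⊕ Fin m2 → ℂ) →ₗ[ℂ] (Fin m' → ℂ)).comp
            (Matrix.toLin' Q)) := (LinearMap.toMatrix'_comp _ _).symm
      _ = 1 := by rw [h1, LinearMap.toMatrix'_id]
  -- embedding of the contracting block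
  set E : Matrix (Fin m1 ⊕ Fin m2) (Fin m1) ℂ :=
    (1 : Matrix (Fin m1 ⊕ Fin m2) (Fin m1 ⊕ Fin m2) ℂ).submatrix id Sum.inl with hE
  set F : Matrix (Fin m1) (Fin c) ℂ := (Q * Nc).submatrix Sum.inl id with hF
  have hX : Q * Nc = E * F := by
    ext i j
    rcases i with i | i
    · have : (E * F) (Sum.inl i) j = F i j := by
        simp [hE, Matrix.mul_apply, Matrix.submatrix_apply, Matrix.one_apply,
          Sum.inl.injEq, ite_mul, zero_mul]
      rw [this]
      rfl
    · have h0 : (Q * Nc) (Sum.inr i) j = 0 := by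
        have h := congrFun (congrFun hQN i) j
        simpa [Matrix.mul_apply, Matrix.submatrix_apply] using h
      have h1 : (E * F) (Sum.inr i) j = 0 := by
        simp [hE, Matrix.mul_apply, Matrix.submatrix_apply, Matrix.one_apply]
      rw [h0, h1]
  have hDE : Dm * E = E * J := by
    ext i j
    rcases i with i | i <;>
      simp [hDm, hE, Matrix.mul_apply, Fintype.sum_sum_type,
        Matrix.fromBlocks_apply₁₁, Matrix.fromBlocks_apply₁₂,
        Matrix.fromBlocks_apply₂₁, Matrix.fromBlocks_apply₂₂,
        Matrix.submatrix_apply, Matrix.one_apply, Sum.inl.injEq,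
        mul_ite, ite_mul, mul_one, mul_zero, zero_mul, one_mul,
        Finset.sum_ite_eq, Finset.sum_ite_eq']
  have hDEn : ∀ n : ℕ, Dm ^ n * E = E * J ^ n := by
    intro n
    induction n with
    | zero => simp
    | succ n ih =>
        calc Dm ^ (n + 1) * E = Dm ^ n * (Dm * E) := by
              rw [pow_succ, Matrix.mul_assoc]
          _ = Dm ^ n * (E * J) := by rw [hDE]
          _ = (Dm ^ n * E) * J := by rw [Matrix.mul_assoc]
          _ = E * J ^ n * J := by rw [ih]
          _ = E * J ^ (n + 1) := by rw [Matrix.mul_assoc, ← pow_succ]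
  have hQpow : ∀ n : ℕ, Q * Ac ^ n = Dm ^ n * Q := by
    intro n
    induction n with
    | zero => simp
    | succ n ih =>
        calc Q * Ac ^ (n + 1) = (Q * Ac ^ n) * Ac := by rw [pow_succ, ← Matrix.mul_assoc]
          _ = Dm ^ n * (Q * Ac) := by rw [ih, Matrix.mul_assoc]
          _ = Dm ^ n * (Dm * Q) := by rw [hsim]
          _ = Dm ^ (n + 1) * Q := by rw [← Matrix.mul_assoc, ← pow_succ]
  have hmain : ∀ n : ℕ, Ac ^ n * Nc = (P * E) * (J ^ n * F) := by
    intro n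
    calc Ac ^ n * Nc = (P * Q) * (Ac ^ n * Nc) := by rw [hPQ, Matrix.one_mul]
      _ = P * ((Q * Ac ^ n) * Nc) := by rw [Matrix.mul_assoc, ← Matrix.mul_assoc Q]
      _ = P * ((Dm ^ n * Q) * Nc) := by rw [hQpow n]
      _ = P * (Dm ^ n * (Q * Nc)) := by rw [Matrix.mul_assoc]
      _ = P * (Dm ^ n * (E * F)) := by rw [hX]
      _ = P * ((Dm ^ n * E) * F) := by
          rw [← Matrix.mul_assoc, ← Matrix.mul_assoc, Matrix.mul_assoc P, Matrix.mul_assoc P]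
      _ = P * ((E * J ^ n) * F) := by rw [hDEn n]
      _ = (P * E) * (J ^ n * F) := by rw [Matrix.mul_assoc E, ← Matrix.mul_assoc P]
  refine ⟨‖P * E‖₊ * ‖F‖₊, fun n => ?_⟩
  calc ‖Ac ^ n * Nc‖₊ = ‖(P * E) * (J ^ n * F)‖₊ := by rw [hmain n]
    _ ≤ ‖P * E‖₊ * ‖J ^ n * F‖₊ := Matrix.l2_opNNNorm_mul _ _
    _ ≤ ‖P * E‖₊ * (‖J ^ n‖₊ * ‖F‖₊) :=
        mul_le_mul_right (Matrix.l2_opNNNorm_mul _ _) _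
    _ = ‖P * E‖₊ * ‖F‖₊ * ‖J ^ n‖₊ := by ring


end BddRecAux

open BddRecAux

/-- Uniform boundedness propagates through a bounded-gain recursion: if the
sets `C_j` and `W_j` have uniformly bounded diameters, `A_ō` is marginally
stable and admits an invertible splitting `Q = [Q_{<1}; Q_{=1}]` with
`Q A_ō = diag(J_{<1}, Λ_{=1}) Q`, `Rho(J_{<1}) < 1`, `Λ_{=1}` diagonal unitary,
and `Q_{=1} A_21 = 0`, `Q_{=1} B_ō = 0`, then the Minkowski sums
`S_k = ∑_{j=j₀}^{k-1} A_ō^{k-1-j}(A_21 C_j + B_ō W_j)` satisfy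
`limsup_k D(S_k) < ∞`. -/
theorem bounded_diam_through_recursion
    (m no pdim m1 m2 : ℕ) (hm : m1 + m2 = m) (j0 : ℕ)
    (Abar : Matrix (Fin m) (Fin m) ℝ)
    (A21 : Matrix (Fin m) (Fin no) ℝ)
    (Bbar : Matrix (Fin m) (Fin pdim) ℝ)
    (hmarg : ∀ μ ∈ spectrum ℂ (Abar.map (Complex.ofReal)), ‖μ‖ ≤ 1)
    (Q : Matrix (Fin m1 ⊕ Fin m2) (Fin m) ℂ)
    (J : Matrix (Fin m1) (Fin m1) ℂ) (d : Fin m2 → ℂ)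
    (hQ : Function.Bijective Q.mulVec)
    (hsim : Q * (Abar.map (Complex.ofReal))
      = Matrix.fromBlocks J 0 0 (Matrix.diagonal d) * Q)
    (hJ : ∀ μ ∈ spectrum ℂ J, ‖μ‖ < 1)
    (hd : ∀ i, ‖d i‖ = 1)
    (hQA21 : Q.submatrix Sum.inr id * (A21.map (Complex.ofReal)) = 0)
    (hQBbar : Q.submatrix Sum.inr id * (Bbar.map (Complex.ofReal)) = 0)
    (C : ℕ → Set (EuclideanSpace ℝ (Fin no)))
    (W : ℕ → Set (EuclideanSpace ℝ (Fin pdim)))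
    (MC MW : ℝ≥0)
    (hC : ∀ j, j0 ≤ j → EMetric.diam (C j) ≤ MC)
    (hW : ∀ j, EMetric.diam (W j) ≤ MW) :
    Filter.atTop.limsup (fun k : ℕ => EMetric.diam
      (∑ j ∈ Finset.Ico j0 k,
        (Matrix.toEuclideanLin (Abar ^ (k - 1 - j))) ''
          ((Matrix.toEuclideanLin A21) '' C j
            + (Matrix.toEuclideanLin Bbar) '' W j))) < ⊤ := by
  classical
  set Ac : Matrix (Fin m) (Fin m) ℂ := Abar.map Complex.ofReal with hAc
  -- decay of J powers
  obtain ⟨cJ, r, hr1, hJn⟩ := jordan_decay J hJ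
  -- algebraic bounds
  obtain ⟨KA, hKA⟩ := key_bound Ac Q J d hQ hsim (A21.map Complex.ofReal) hQA21
  obtain ⟨KB, hKB⟩ := key_bound Ac Q J d hQ hsim (Bbar.map Complex.ofReal) hQBbar
  -- map of powers
  have hpowmap : ∀ (n : ℕ) {c : ℕ} (N : Matrix (Fin m) (Fin c) ℝ),
      (Abar ^ n * N).map Complex.ofReal = Ac ^ n * (N.map Complex.ofReal) := by
    intro n c N
    have h1 : (Abar ^ n * N).map (Complex.ofRealHom : ℝ →+* ℂ)
        = (Abar ^ n).map Complex.ofRealHom * N.map Complex.ofRealHom :=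
      Matrix.map_mul
    have h2 : (Abar ^ n).map (Complex.ofRealHom : ℝ →+* ℂ) = Ac ^ n := by
      exact
        (map_pow (Complex.ofRealHom.mapMatrix) Abar n)
    calc (Abar ^ n * N).map Complex.ofReal
        = (Abar ^ n * N).map (Complex.ofRealHom : ℝ →+* ℂ) := rfl
      _ = (Abar ^ n).map Complex.ofRealHom * N.map Complex.ofRealHom := h1
      _ = Ac ^ n * (N.map Complex.ofReal) := by rw [h2]; rfl
  -- constant
  set c0 : ℝ≥0 := KA * cJ * MC + KB * cJ * MW with hc0
  set T : ℝ≥0∞ := (c0 : ℝ≥0∞) * (1 - (r : ℝ≥0∞))⁻¹ with hT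
  have hbound : ∀ k : ℕ, EMetric.diam
      (∑ j ∈ Finset.Ico j0 k,
        (Matrix.toEuclideanLin (Abar ^ (k - 1 - j))) ''
          ((Matrix.toEuclideanLin A21) '' C j
            + (Matrix.toEuclideanLin Bbar) '' W j)) ≤ T := by
    intro k
    have hterm : ∀ j ∈ Finset.Ico j0 k, EMetric.diam
        ((Matrix.toEuclideanLin (Abar ^ (k - 1 - j))) ''
          ((Matrix.toEuclideanLin A21) '' C j
            + (Matrix.toEuclideanLin Bbar) '' W j))
        ≤ (c0 : ℝ≥0∞) * ((r : ℝ≥0∞)) ^ (k - 1 - j) := by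
      intro j hj
      obtain ⟨hj0, hjk⟩ := Finset.mem_Ico.mp hj
      set n : ℕ := k - 1 - j with hn
      have himg : ∀ {c : ℕ} (N : Matrix (Fin m) (Fin c) ℝ)
          (s : Set (EuclideanSpace ℝ (Fin c))),
          Matrix.toEuclideanLin (Abar ^ n) '' (Matrix.toEuclideanLin N '' s)
            = Matrix.toEuclideanLin (Abar ^ n * N) '' s := by
        intro c N s
        rw [← Set.image_comp]
        apply Set.image_congr'
        intro x
        exact (toEuclideanLin_mul_apply _ _ _).symm
      have hsplit : Matrix.toEuclideanLin (Abar ^ n) ''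
          ((Matrix.toEuclideanLin A21) '' C j + (Matrix.toEuclideanLin Bbar) '' W j)
          = Matrix.toEuclideanLin (Abar ^ n * A21) '' C j
            + Matrix.toEuclideanLin (Abar ^ n * Bbar) '' W j := by
        rw [Set.image_add, himg, himg]
      rw [hsplit]
      have hA : EMetric.diam (Matrix.toEuclideanLin (Abar ^ n * A21) '' C j)
          ≤ ((KA * (cJ * r ^ n) : ℝ≥0) : ℝ≥0∞) * (MC : ℝ≥0∞) := by
        refine le_trans ((lipschitzWith_toEuclideanLin _).ediam_image_le _) ?_
        refine mul_le_mul' ?_ (hC j hj0)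
        rw [ENNReal.coe_le_coe, hpowmap n A21]
        exact le_trans (hKA n) (mul_le_mul_right (hJn n) _)
      have hB : EMetric.diam (Matrix.toEuclideanLin (Abar ^ n * Bbar) '' W j)
          ≤ ((KB * (cJ * r ^ n) : ℝ≥0) : ℝ≥0∞) * (MW : ℝ≥0∞) := by
        refine le_trans ((lipschitzWith_toEuclideanLin _).ediam_image_le _) ?_
        refine mul_le_mul' ?_ (hW j)
        rw [ENNReal.coe_le_coe, hpowmap n Bbar]
        exact le_trans (hKB n) (mul_le_mul_right (hJn n) _)
      calc EMetric.diam (Matrix.toEuclideanLin (Abar ^ n * A21) '' C j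
            + Matrix.toEuclideanLin (Abar ^ n * Bbar) '' W j)
          ≤ EMetric.diam (Matrix.toEuclideanLin (Abar ^ n * A21) '' C j)
            + EMetric.diam (Matrix.toEuclideanLin (Abar ^ n * Bbar) '' W j) :=
            ediam_set_add _ _
        _ ≤ ((KA * (cJ * r ^ n) : ℝ≥0) : ℝ≥0∞) * (MC : ℝ≥0∞)
            + ((KB * (cJ * r ^ n) : ℝ≥0) : ℝ≥0∞) * (MW : ℝ≥0∞) := add_le_add hA hB
        _ = (c0 : ℝ≥0∞) * ((r : ℝ≥0∞)) ^ n := by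
            rw [hc0]
            push_cast
            ring
    calc EMetric.diam (∑ j ∈ Finset.Ico j0 k,
          (Matrix.toEuclideanLin (Abar ^ (k - 1 - j))) ''
            ((Matrix.toEuclideanLin A21) '' C j
              + (Matrix.toEuclideanLin Bbar) '' W j))
        ≤ ∑ j ∈ Finset.Ico j0 k, EMetric.diam
            ((Matrix.toEuclideanLin (Abar ^ (k - 1 - j))) ''
              ((Matrix.toEuclideanLin A21) '' C j
                + (Matrix.toEuclideanLin Bbar) '' W j)) :=
          ediam_finset_sum _ _
      _ ≤ ∑ j ∈ Finset.Ico j0 k, (c0 : ℝ≥0∞) * ((r : ℝ≥0∞)) ^ (k - 1 - j) :=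
          Finset.sum_le_sum hterm
      _ = (c0 : ℝ≥0∞) * ∑ j ∈ Finset.Ico j0 k, ((r : ℝ≥0∞)) ^ (k - 1 - j) :=
          (Finset.mul_sum _ _ _).symm
      _ ≤ (c0 : ℝ≥0∞) * ∑' n : ℕ, ((r : ℝ≥0∞)) ^ n := by
          refine mul_le_mul_right ?_ _
          have hinj : ∀ x ∈ Finset.Ico j0 k, ∀ y ∈ Finset.Ico j0 k,
              k - 1 - x = k - 1 - y → x = y := by
            intro x hx y hy hxy
            have hx' := (Finset.mem_Ico.mp hx).2
            have hy' := (Finset.mem_Ico.mp hy).2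
            omega
          have himage := Finset.sum_image (s := Finset.Ico j0 k)
            (f := fun n : ℕ => ((r : ℝ≥0∞)) ^ n) (g := fun j => k - 1 - j) hinj
          rw [← himage]
          exact ENNReal.sum_le_tsum _
      _ = T := by rw [hT, ENNReal.tsum_geometric]
  have hlim : Filter.atTop.limsup (fun k : ℕ => EMetric.diam
      (∑ j ∈ Finset.Ico j0 k,
        (Matrix.toEuclideanLin (Abar ^ (k - 1 - j))) ''
          ((Matrix.toEuclideanLin A21) '' C j
            + (Matrix.toEuclideanLin Bbar) '' W j))) ≤ T :=
    Filter.limsup_le_of_le (h := Filter.Eventually.of_forall hbound)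
  refine lt_of_le_of_lt hlim ?_
  rw [hT]
  apply ENNReal.mul_lt_top
  · exact ENNReal.coe_lt_top
  · rw [ENNReal.inv_lt_top]
    rw [tsub_pos_iff_lt]
    exact_mod_cast hr1
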